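/- Global relation for the constant-coefficient heat equation. Let σ₀ > 0, a < b, T > 0, and let q : [a,b] × [0,T] → ℝ be continuous, twice continuously differentiable in x and once in t on the closed rectangle, with q_t(x,t) = σ₀² q_{xx}(x,t) for all (x,t) ∈ [a,b] × [0,T]. Then for every k ∈ ℂ and every t ∈ [0,T]: e^{σ₀²k²t} ∫_a^b e^{−iky} q(y,t) dy = ∫_a^b e^{−iky} q(y,0) dy + σ₀² e^{−ikb} ∫_0^t e^{σ₀²k²s} ( q_x(b,s) + ik·q(b,s) ) ds − σ₀² e^{−ika} ∫_0^t e^{σ₀²k²s} ( q_x(a,s) + ik·q(a,s) ) ds. -/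

import Mathlib

open MeasureTheory Filter Metric

noncomputable section

/-- auxiliary: `Complex.exp (-i k y)`. -/
noncomputable def Ee (k : ℂ) (y : ℝ) : ℂ := Complex.exp (-Complex.I * k * (y : ℂ))

/-- auxiliary: the dispersion constant. -/
noncomputable def cc (σ₀ : ℝ) (k : ℂ) : ℂ := (σ₀ : ℂ) ^ 2 * k ^ 2

/-- auxiliary: the spatial Fourier-type integral. -/
noncomputable def Pp (q : ℝ → ℝ → ℝ) (k : ℂ) (a b s : ℝ) : ℂ :=
  ∫ y in a..b, Ee k y * ((q y s : ℝ) : ℂ)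

/-- auxiliary: boundary flux function. -/
noncomputable def Bb (q qx : ℝ → ℝ → ℝ) (k : ℂ) (x s : ℝ) : ℂ :=
  Ee k x * (((qx x s : ℝ) : ℂ) + Complex.I * k * ((q x s : ℝ) : ℂ))

/-- auxiliary: time boundary integral. -/
noncomputable def Jj (q qx : ℝ → ℝ → ℝ) (σ₀ : ℝ) (k : ℂ) (x t : ℝ) : ℂ :=
  ∫ s in (0 : ℝ)..t, Complex.exp (cc σ₀ k * (s : ℂ)) *
    (((qx x s : ℝ) : ℂ) + Complex.I * k * ((q x s : ℝ) : ℂ))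

lemma hdw_ofReal_comp {f : ℝ → ℝ} {u z : ℝ} {s : Set ℝ} (hf : HasDerivWithinAt f u s z) :
    HasDerivWithinAt (fun y : ℝ => ((f y : ℝ) : ℂ)) (u : ℂ) s z := by
  exact hf.ofReal_comp

lemma hEd (k : ℂ) (y : ℝ) :
    HasDerivAt (Ee k) (Ee k y * (-Complex.I * k)) y := by
  have h0 : HasDerivAt (fun y : ℝ => (y : ℂ)) 1 y := by
    simpa using (hasDerivAt_id y).ofReal_comp
  have h1 : HasDerivAt (fun y : ℝ => -Complex.I * k * (y : ℂ)) (-Complex.I * k) y := by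
    simpa using h0.const_mul (-Complex.I * k)
  exact h1.cexp

lemma hEc (k : ℂ) : Continuous (Ee k) := by
  unfold Ee; fun_prop

lemma hexpd (σ₀ : ℝ) (k : ℂ) (s : ℝ) :
    HasDerivAt (fun s : ℝ => Complex.exp (cc σ₀ k * (s : ℂ)))
      (Complex.exp (cc σ₀ k * (s : ℂ)) * cc σ₀ k) s := by
  have h0 : HasDerivAt (fun y : ℝ => (y : ℂ)) 1 s := by
    simpa using (hasDerivAt_id s).ofReal_comp
  simpa using (h0.const_mul (cc σ₀ k)).cexp

lemma hexpc (σ₀ : ℝ) (k : ℂ) : Continuous (fun s : ℝ => Complex.exp (cc σ₀ k * (s : ℂ))) := by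
  fun_prop

/-- the global relation for the constant-coefficient heat equation
`q_t = σ₀² q_{xx}` on `[a,b] × [0,T]`. -/
theorem stmt_13 (σ₀ a b T : ℝ) (hσ₀ : 0 < σ₀) (hab : a < b) (hT : 0 < T)
    (q qx qxx qt : ℝ → ℝ → ℝ)
    -- q is continuous on the closed rectangle
    (hcont : ContinuousOn (fun p : ℝ × ℝ => q p.1 p.2) (Set.Icc a b ×ˢ Set.Icc 0 T))
    -- q is twice continuously differentiable in x on the closed rectangle
    (hqx : ∀ x ∈ Set.Icc a b, ∀ t ∈ Set.Icc 0 T,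
      HasDerivWithinAt (fun x' => q x' t) (qx x t) (Set.Icc a b) x)
    (hqxx : ∀ x ∈ Set.Icc a b, ∀ t ∈ Set.Icc 0 T,
      HasDerivWithinAt (fun x' => qx x' t) (qxx x t) (Set.Icc a b) x)
    (hcontx : ContinuousOn (fun p : ℝ × ℝ => qx p.1 p.2) (Set.Icc a b ×ˢ Set.Icc 0 T))
    (hcontxx : ContinuousOn (fun p : ℝ × ℝ => qxx p.1 p.2) (Set.Icc a b ×ˢ Set.Icc 0 T))
    -- q is once continuously differentiable in t on the closed rectangle
    (hqt : ∀ x ∈ Set.Icc a b, ∀ t ∈ Set.Icc 0 T,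
      HasDerivWithinAt (fun t' => q x t') (qt x t) (Set.Icc 0 T) t)
    (hcontt : ContinuousOn (fun p : ℝ × ℝ => qt p.1 p.2) (Set.Icc a b ×ˢ Set.Icc 0 T))
    -- the heat equation
    (hpde : ∀ x ∈ Set.Icc a b, ∀ t ∈ Set.Icc 0 T, qt x t = σ₀ ^ 2 * qxx x t)
    (k : ℂ) (t : ℝ) (ht : t ∈ Set.Icc 0 T) :
    Complex.exp ((σ₀ : ℂ) ^ 2 * k ^ 2 * (t : ℂ)) *
        ∫ y in a..b, Complex.exp (-Complex.I * k * (y : ℂ)) * ((q y t : ℝ) : ℂ) =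
      (∫ y in a..b, Complex.exp (-Complex.I * k * (y : ℂ)) * ((q y 0 : ℝ) : ℂ)) +
        (σ₀ : ℂ) ^ 2 * Complex.exp (-Complex.I * k * (b : ℂ)) *
          (∫ s in (0 : ℝ)..t, Complex.exp ((σ₀ : ℂ) ^ 2 * k ^ 2 * (s : ℂ)) *
            (((qx b s : ℝ) : ℂ) + Complex.I * k * ((q b s : ℝ) : ℂ))) -
        (σ₀ : ℂ) ^ 2 * Complex.exp (-Complex.I * k * (a : ℂ)) *
          ∫ s in (0 : ℝ)..t, Complex.exp ((σ₀ : ℂ) ^ 2 * k ^ 2 * (s : ℂ)) *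
            (((qx a s : ℝ) : ℂ) + Complex.I * k * ((q a s : ℝ) : ℂ)) := by
  have habl : a ≤ b := hab.le
  have huab : Set.uIcc a b = Set.Icc a b := Set.uIcc_of_le habl
  have huIoc : Set.uIoc a b = Set.Ioc a b := Set.uIoc_of_le habl
  have ht0 : (0 : ℝ) ≤ t := ht.1
  have hu0t : Set.uIcc (0 : ℝ) t = Set.Icc 0 t := Set.uIcc_of_le ht0
  -- slices in space at fixed time
  have slice : ∀ (r : ℝ → ℝ → ℝ),
      ContinuousOn (fun p : ℝ × ℝ => r p.1 p.2) (Set.Icc a b ×ˢ Set.Icc 0 T) →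
      ∀ s ∈ Set.Icc (0 : ℝ) T, ContinuousOn (fun y => ((r y s : ℝ) : ℂ)) (Set.Icc a b) := by
    intro r hr s hs
    have h1 : ContinuousOn (fun y => r y s) (Set.Icc a b) :=
      hr.comp ((continuous_id.prodMk continuous_const).continuousOn)
        (fun y hy => ⟨hy, hs⟩)
    exact Complex.continuous_ofReal.comp_continuousOn h1
  -- slices in time at fixed space point
  have tslice : ∀ (r : ℝ → ℝ → ℝ),
      ContinuousOn (fun p : ℝ × ℝ => r p.1 p.2) (Set.Icc a b ×ˢ Set.Icc 0 T) →
      ∀ x ∈ Set.Icc a b, ContinuousOn (fun s => ((r x s : ℝ) : ℂ)) (Set.Icc 0 T) := by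
    intro r hr x hx
    have h1 : ContinuousOn (fun s => r x s) (Set.Icc 0 T) :=
      hr.comp ((continuous_const.prodMk continuous_id).continuousOn)
        (fun s hs => ⟨hx, hs⟩)
    exact Complex.continuous_ofReal.comp_continuousOn h1
  -- bounds
  obtain ⟨Mq, hMq⟩ := (isCompact_Icc.prod isCompact_Icc).exists_bound_of_continuousOn hcont
  obtain ⟨Mt, hMt⟩ := (isCompact_Icc.prod isCompact_Icc).exists_bound_of_continuousOn hcontt
  obtain ⟨ME, hME⟩ :=
    isCompact_Icc.exists_bound_of_continuousOn (s := Set.Icc a b) (hEc k).continuousOn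
  have hME0 : 0 ≤ ME := le_trans (norm_nonneg _) (hME a (Set.left_mem_Icc.mpr habl))
  -- key spatial identity via FTC in `y`
  have key : ∀ s ∈ Set.Icc (0 : ℝ) T,
      (∫ y in a..b, Ee k y * ((qt y s : ℝ) : ℂ)) =
        (σ₀ : ℂ) ^ 2 * (Bb q qx k b s - Bb q qx k a s) - cc σ₀ k * Pp q k a b s := by
    intro s hs
    have hderivB : ∀ y ∈ Set.Icc a b, HasDerivWithinAt (fun y => Bb q qx k y s)
        (Ee k y * (((qxx y s : ℝ) : ℂ) + k ^ 2 * ((q y s : ℝ) : ℂ))) (Set.Icc a b) y := by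
      intro y hy
      have h1 : HasDerivWithinAt (fun y => ((qx y s : ℝ) : ℂ)) ((qxx y s : ℝ) : ℂ)
          (Set.Icc a b) y := hdw_ofReal_comp (hqxx y hy s hs)
      have h2 : HasDerivWithinAt (fun y => ((q y s : ℝ) : ℂ)) ((qx y s : ℝ) : ℂ)
          (Set.Icc a b) y := hdw_ofReal_comp (hqx y hy s hs)
      have h3 := h1.add (h2.const_mul (Complex.I * k))
      have h4 := ((hEd k y).hasDerivWithinAt).mul h3
      refine h4.congr_deriv ?_
      simp only [Pi.add_apply]
      linear_combination (-(Ee k y * k ^ 2 * ((q y s : ℝ) : ℂ))) * Complex.I_sq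
    have hBcont : ContinuousOn (fun y => Bb q qx k y s) (Set.Icc a b) := by
      unfold Bb
      exact (hEc k).continuousOn.mul
        ((slice qx hcontx s hs).add (continuousOn_const.mul (slice q hcont s hs)))
    have hint : IntervalIntegrable
        (fun y => Ee k y * (((qxx y s : ℝ) : ℂ) + k ^ 2 * ((q y s : ℝ) : ℂ))) volume a b := by
      apply ContinuousOn.intervalIntegrable
      rw [huab]
      exact (hEc k).continuousOn.mul
        ((slice qxx hcontxx s hs).add (continuousOn_const.mul (slice q hcont s hs)))
    have hFTCx := intervalIntegral.integral_eq_sub_of_hasDeriv_right_of_le habl hBcont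
      (fun y hy => ((hderivB y (Set.Ioo_subset_Icc_self hy)).hasDerivAt
        (Icc_mem_nhds hy.1 hy.2)).hasDerivWithinAt) hint
    have int1 : IntervalIntegrable (fun y => Ee k y * ((qxx y s : ℝ) : ℂ)) volume a b := by
      apply ContinuousOn.intervalIntegrable
      rw [huab]
      exact (hEc k).continuousOn.mul (slice qxx hcontxx s hs)
    have int2 : IntervalIntegrable (fun y => k ^ 2 * (Ee k y * ((q y s : ℝ) : ℂ))) volume a b := by
      apply ContinuousOn.intervalIntegrable
      rw [huab]
      exact continuousOn_const.mul ((hEc k).continuousOn.mul (slice q hcont s hs))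
    have h5 : (∫ y in a..b, Ee k y * ((qt y s : ℝ) : ℂ)) =
        (σ₀ : ℂ) ^ 2 * ∫ y in a..b, Ee k y * ((qxx y s : ℝ) : ℂ) := by
      rw [← intervalIntegral.integral_const_mul]
      apply intervalIntegral.integral_congr
      intro y hy
      rw [huab] at hy
      have hp := hpde y hy s hs
      simp only [hp]
      push_cast
      ring
    have h6 : (∫ y in a..b, Ee k y * (((qxx y s : ℝ) : ℂ) + k ^ 2 * ((q y s : ℝ) : ℂ))) =
        (∫ y in a..b, Ee k y * ((qxx y s : ℝ) : ℂ)) + k ^ 2 * Pp q k a b s := by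
      simp only [Pp]
      rw [← intervalIntegral.integral_const_mul, ← intervalIntegral.integral_add int1 int2]
      apply intervalIntegral.integral_congr
      intro y hy
      ring
    rw [h5]
    have h7 : (∫ y in a..b, Ee k y * ((qxx y s : ℝ) : ℂ)) =
        (Bb q qx k b s - Bb q qx k a s) - k ^ 2 * Pp q k a b s := by
      linear_combination hFTCx - h6
    rw [h7]
    simp only [cc]
    ring
  -- measurability of slices on `Ι a b`
  have measl : ∀ (r : ℝ → ℝ → ℝ),
      ContinuousOn (fun p : ℝ × ℝ => r p.1 p.2) (Set.Icc a b ×ˢ Set.Icc 0 T) →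
      ∀ x ∈ Set.Icc (0 : ℝ) T,
      AEStronglyMeasurable (fun y => Ee k y * ((r y x : ℝ) : ℂ)) (volume.restrict (Set.uIoc a b)) := by
    intro r hr x hx
    apply ContinuousOn.aestronglyMeasurable _ measurableSet_uIoc
    have hsub : Set.uIoc a b ⊆ Set.Icc a b := by
      rw [huIoc]; exact Set.Ioc_subset_Icc_self
    exact (((hEc k).continuousOn.mul (slice r hr x hx)).mono hsub)
  -- derivative of P in time
  have hPd : ∀ s ∈ Set.Ioo (0 : ℝ) T, HasDerivAt (fun τ => Pp q k a b τ)
      (∫ y in a..b, Ee k y * ((qt y s : ℝ) : ℂ)) s := by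
    intro s hs
    have hε0 : 0 < min s (T - s) := lt_min hs.1 (sub_pos.mpr hs.2)
    have hball : Metric.ball s (min s (T - s)) ⊆ Set.Ioo 0 T := by
      intro x hx
      rw [Metric.mem_ball, Real.dist_eq, abs_lt] at hx
      have h1 := min_le_left s (T - s)
      have h2 := min_le_right s (T - s)
      constructor <;> [linarith [hx.1]; linarith [hx.2]]
    have hmain := intervalIntegral.hasDerivAt_integral_of_dominated_loc_of_deriv_le
      (F := fun x y => Ee k y * ((q y x : ℝ) : ℂ))
      (F' := fun x y => Ee k y * ((qt y x : ℝ) : ℂ))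
      (bound := fun _ => ME * Mt) (μ := volume) (a := a) (b := b) (x₀ := s) (Metric.ball_mem_nhds s hε0)
      ?_ ?_ ?_ ?_ ?_ ?_
    · exact hmain.2
    · filter_upwards [Ioo_mem_nhds hs.1 hs.2] with x hx
      exact measl q hcont x (Set.Ioo_subset_Icc_self hx)
    · apply ContinuousOn.intervalIntegrable
      rw [huab]
      exact (hEc k).continuousOn.mul (slice q hcont s (Set.Ioo_subset_Icc_self hs))
    · exact measl qt hcontt s (Set.Ioo_subset_Icc_self hs)
    · refine ae_of_all _ ?_
      intro y hy x hx
      have hyI : y ∈ Set.Icc a b := Set.Ioc_subset_Icc_self (huIoc ▸ hy)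
      have hxI : x ∈ Set.Icc (0 : ℝ) T := Set.Ioo_subset_Icc_self (hball hx)
      rw [norm_mul]
      refine mul_le_mul (hME y hyI) ?_ (norm_nonneg _) hME0
      simpa [Complex.norm_real] using hMt (y, x) ⟨hyI, hxI⟩
    · exact intervalIntegrable_const
    · refine ae_of_all _ ?_
      intro y hy x hx
      have hyI : y ∈ Set.Icc a b := Set.Ioc_subset_Icc_self (huIoc ▸ hy)
      have hxO : x ∈ Set.Ioo (0 : ℝ) T := hball hx
      have hd := (hqt y hyI x (Set.Ioo_subset_Icc_self hxO)).hasDerivAt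
        (Icc_mem_nhds hxO.1 hxO.2)
      exact hd.ofReal_comp.const_mul (Ee k y)
  -- continuity of P on [0, T]
  have hPc : ContinuousOn (fun τ => Pp q k a b τ) (Set.Icc 0 T) := by
    intro s₀ hs₀
    refine intervalIntegral.continuousWithinAt_of_dominated_interval (bound := fun _ => ME * Mq) ?_ ?_
      intervalIntegrable_const ?_
    · filter_upwards [self_mem_nhdsWithin] with x hx
      exact measl q hcont x hx
    · filter_upwards [self_mem_nhdsWithin] with x hx
      refine ae_of_all _ ?_
      intro y hy
      have hyI : y ∈ Set.Icc a b := Set.Ioc_subset_Icc_self (huIoc ▸ hy)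
      rw [norm_mul]
      refine mul_le_mul (hME y hyI) ?_ (norm_nonneg _) hME0
      simpa [Complex.norm_real] using hMq (y, x) ⟨hyI, hx⟩
    · refine ae_of_all _ ?_
      intro y hy
      have hyI : y ∈ Set.Icc a b := Set.Ioc_subset_Icc_self (huIoc ▸ hy)
      exact continuousWithinAt_const.mul ((tslice q hcont y hyI) s₀ hs₀)
  -- integrability of the boundary integrands in time
  have hJint : ∀ x ∈ Set.Icc a b, IntervalIntegrable
      (fun s => Complex.exp (cc σ₀ k * (s : ℂ)) *
        (((qx x s : ℝ) : ℂ) + Complex.I * k * ((q x s : ℝ) : ℂ))) volume 0 t := by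
    intro x hx
    apply ContinuousOn.intervalIntegrable
    rw [hu0t]
    refine (hexpc σ₀ k).continuousOn.mul (ContinuousOn.mono ?_ (Set.Icc_subset_Icc le_rfl ht.2))
    exact (tslice qx hcontx x hx).add (continuousOn_const.mul (tslice q hcont x hx))
  -- derivative of F
  have hFd : ∀ s ∈ Set.Ioo (0 : ℝ) t,
      HasDerivAt (fun τ : ℝ => Complex.exp (cc σ₀ k * (τ : ℂ)) * Pp q k a b τ)
        (Complex.exp (cc σ₀ k * (s : ℂ)) *
          ((σ₀ : ℂ) ^ 2 * (Bb q qx k b s - Bb q qx k a s))) s := by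
    intro s hs
    have hsT : s ∈ Set.Ioo (0 : ℝ) T := ⟨hs.1, lt_of_lt_of_le hs.2 ht.2⟩
    have h1 := (hexpd σ₀ k s).mul (hPd s hsT)
    rw [key s (Set.Ioo_subset_Icc_self hsT)] at h1
    refine h1.congr_deriv ?_
    ring
  -- continuity of F on [0, t]
  have hFc : ContinuousOn (fun τ : ℝ => Complex.exp (cc σ₀ k * (τ : ℂ)) * Pp q k a b τ)
      (Set.Icc 0 t) :=
    (hexpc σ₀ k).continuousOn.mul (hPc.mono (Set.Icc_subset_Icc le_rfl ht.2))
  -- integrability of G on [0, t]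
  have hGint : IntervalIntegrable (fun s => Complex.exp (cc σ₀ k * (s : ℂ)) *
      ((σ₀ : ℂ) ^ 2 * (Bb q qx k b s - Bb q qx k a s))) volume 0 t := by
    have hBb : ∀ x ∈ Set.Icc a b, ContinuousOn (fun s => Bb q qx k x s) (Set.Icc 0 t) := by
      intro x hx
      simp only [Bb]
      exact continuousOn_const.mul
        (((tslice qx hcontx x hx).add (continuousOn_const.mul (tslice q hcont x hx))).mono
          (Set.Icc_subset_Icc le_rfl ht.2))
    apply ContinuousOn.intervalIntegrable
    rw [hu0t]
    exact (hexpc σ₀ k).continuousOn.mul (continuousOn_const.mul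
      ((hBb b (Set.right_mem_Icc.mpr habl)).sub (hBb a (Set.left_mem_Icc.mpr habl))))
  -- FTC in time
  have hFTC : (∫ s in (0 : ℝ)..t, Complex.exp (cc σ₀ k * (s : ℂ)) *
        ((σ₀ : ℂ) ^ 2 * (Bb q qx k b s - Bb q qx k a s))) =
      Complex.exp (cc σ₀ k * ((t : ℝ) : ℂ)) * Pp q k a b t -
        Complex.exp (cc σ₀ k * ((0 : ℝ) : ℂ)) * Pp q k a b 0 :=
    intervalIntegral.integral_eq_sub_of_hasDeriv_right_of_le ht0 hFc
      (fun s hs => (hFd s hs).hasDerivWithinAt) hGint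
  -- splitting the time integral
  have hsplit : (∫ s in (0 : ℝ)..t, Complex.exp (cc σ₀ k * (s : ℂ)) *
        ((σ₀ : ℂ) ^ 2 * (Bb q qx k b s - Bb q qx k a s))) =
      (σ₀ : ℂ) ^ 2 * Ee k b * Jj q qx σ₀ k b t - (σ₀ : ℂ) ^ 2 * Ee k a * Jj q qx σ₀ k a t := by
    simp only [Jj]
    rw [← intervalIntegral.integral_const_mul, ← intervalIntegral.integral_const_mul,
      ← intervalIntegral.integral_sub
        ((hJint b (Set.right_mem_Icc.mpr habl)).const_mul _)
        ((hJint a (Set.left_mem_Icc.mpr habl)).const_mul _)]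
    apply intervalIntegral.integral_congr
    intro s hs
    simp only [Bb]
    ring
  have h0 : Complex.exp (cc σ₀ k * ((0 : ℝ) : ℂ)) = 1 := by
    norm_num
  show Complex.exp (cc σ₀ k * (t : ℂ)) * Pp q k a b t =
      Pp q k a b 0 + (σ₀ : ℂ) ^ 2 * Ee k b * Jj q qx σ₀ k b t -
        (σ₀ : ℂ) ^ 2 * Ee k a * Jj q qx σ₀ k a t
  linear_combination -hFTC + hsplit + Pp q k a b 0 * h0
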